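/- The asymptotic dimension of (ω, F) is strictly positive: ω cannot be partitioned into a single F₀-disjoint uniformly bounded family for the entourage F₀ containing all pairs (n, n+1); hence asdim(ω, F) ≠ 0. -/
import Mathlib


open Set Pointwise Filter Topology

/-- Ball of radius `E` around `x`. -/
def cball {X : Type*} (E : Set (X × X)) (x : X) : Set X := {y | (x, y) ∈ E}

/-- Ball of radius `E` around a set `A`. -/
def cballSet {X : Type*} (E : Set (X × X)) (A : Set X) : Set X := ⋃ a ∈ A, cball E a

/-- The condition on `φ : ω → [ω]^{<ω}` defining the family `Φ`. -/
def IsPhi (φ : ℕ → Finset ℕ) : Prop := (∀ n, n ∈ φ n) ∧ ∀ n, {m | n ∈ φ m}.Finite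

/-- The coarse structure `F` on `ω`. -/
def Ffam : Set (Set (ℕ × ℕ)) :=
  {E | ∃ φ : ℕ → Finset ℕ, IsPhi φ ∧ E ⊆ {p : ℕ × ℕ | p.2 ∈ φ p.1}}

/-- A family of sets is `H`-bounded. -/
def IsBoundedFam {X : Type*} (H : Set (X × X)) (M : Set (Set X)) : Prop :=
  ∀ A ∈ M, ∃ x, A ⊆ cball H x

/-- A family of sets is `E`-disjoint. -/
def IsDisjFam {X : Type*} (E : Set (X × X)) (M : Set (Set X)) : Prop :=
  ∀ A ∈ M, ∀ B ∈ M, A ≠ B → cballSet E A ∩ B = ∅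

/-- `asdim (X, C) ≤ n`. -/
def AsdimLE {X : Type*} (C : Set (Set (X × X))) (n : ℕ) : Prop :=
  ∀ E ∈ C, ∃ H ∈ C, ∃ M : Fin (n + 1) → Set (Set X),
    ⋃₀ (⋃ i, M i) = univ ∧ (∀ i, IsBoundedFam H (M i)) ∧ ∀ i, IsDisjFam E (M i)

/-- `asdim (ω, F) ≠ 0`. -/
theorem asdim_Ffam_pos (F0 : Set (ℕ × ℕ)) (hF0 : F0 ∈ Ffam)
    (hsucc : ∀ n : ℕ, (n, n + 1) ∈ F0) :
    (¬ ∃ H ∈ Ffam, ∃ M : Set (Set ℕ),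
      ⋃₀ M = univ ∧ IsBoundedFam H M ∧ IsDisjFam F0 M) ∧
    ¬ AsdimLE Ffam 0 := by
  have key : ¬ ∃ H ∈ Ffam, ∃ M : Set (Set ℕ),
      ⋃₀ M = univ ∧ IsBoundedFam H M ∧ IsDisjFam F0 M := by
    rintro ⟨H, ⟨ψ, hψ, hHsub⟩, M, hcov, hbd, hdisj⟩
    have h0 : (0:ℕ) ∈ ⋃₀ M := hcov ▸ mem_univ 0
    obtain ⟨A, hAM, h0A⟩ := h0
    have hall : ∀ n, n ∈ A := by
      intro n
      induction n with
      | zero => exact h0A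
      | succ n ih =>
        have hn1 : (n+1:ℕ) ∈ ⋃₀ M := hcov ▸ mem_univ _
        obtain ⟨B, hBM, hB⟩ := hn1
        by_cases hAB : A = B
        · exact hAB ▸ hB
        · exfalso
          have hmem : (n+1) ∈ cballSet F0 A ∩ B :=
            ⟨mem_biUnion ih (hsucc n), hB⟩
          rw [hdisj A hAM B hBM hAB] at hmem
          exact hmem
    obtain ⟨x, hx⟩ := hbd A hAM
    have hsub : A ⊆ ↑(ψ x) := fun y hy => hHsub (hx hy)
    have hfin : (Set.univ : Set ℕ).Finite :=
      ((ψ x).finite_toSet).subset (fun y _ => hsub (hall y))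
    exact Set.infinite_univ hfin
  refine ⟨key, fun h => ?_⟩
  obtain ⟨H, hH, M, hcov, hbd, hdisj⟩ := h F0 hF0
  refine key ⟨H, hH, M 0, ?_, hbd 0, hdisj 0⟩
  have : (⋃ i, M i) = M 0 := by
    ext A
    simp only [mem_iUnion]
    exact ⟨fun ⟨i, hi⟩ => by rwa [Fin.fin_one_eq_zero i] at hi, fun h => ⟨0, h⟩⟩
  rw [← this]; exact hcov
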